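/- Let k ≥ 3 be an integer. There exists a unique strictly decreasing sequence (a_i)_{i=1}^{∞} of positive real numbers with a_1 = 1 such that G = ⋃_{i=1}^{∞} (a_{2i}, a_{2i−1}] is a k-good set and Bad(G) = ⋃_{i=1}^{∞} (a_{2i+1}, a_{2i}]. -/

import Mathlib

/-- A set `G` of reals is `k`-good if it contains no geometric progression of
length `k` with integer ratio. -/
def kGood (k : ℕ) (G : Set ℝ) : Prop :=
  ¬ ∃ (a : ℝ) (r : ℕ), 0 < a ∧ 2 ≤ r ∧ ∀ j < k, a * (r : ℝ) ^ j ∈ G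

/-- `x` is `k`-bad with respect to `G` if there is an integer `r ≥ 2` with
`x * r ^ j ∈ G` for all `j ∈ {1,...,k-1}`. -/
def kBadWrt (k : ℕ) (G : Set ℝ) (x : ℝ) : Prop :=
  ∃ r : ℕ, 2 ≤ r ∧ ∀ j : ℕ, 1 ≤ j → j ≤ k - 1 → x * (r : ℝ) ^ j ∈ G

/-- `Bad k G` is the set of `x ∈ (0,1] \ G` that are `k`-bad with respect to `G`. -/
def Bad (k : ℕ) (G : Set ℝ) : Set ℝ :=
  {x | x ∈ Set.Ioc (0 : ℝ) 1 \ G ∧ kBadWrt k G x}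

/-- finite unions of Ioc intervals -/
def FinIoc (S : Set ℝ) : Prop :=
  ∃ F : Finset (ℝ × ℝ), ∀ x, x ∈ S ↔ ∃ p ∈ F, x ∈ Set.Ioc p.1 p.2

lemma finIoc_empty : FinIoc (∅ : Set ℝ) := ⟨∅, by simp⟩

lemma finIoc_Ioc (u v : ℝ) : FinIoc (Set.Ioc u v) := ⟨{(u, v)}, by simp⟩

lemma FinIoc.union {S T : Set ℝ} (hS : FinIoc S) (hT : FinIoc T) : FinIoc (S ∪ T) := by
  obtain ⟨F, hF⟩ := hS; obtain ⟨F', hF'⟩ := hT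
  refine ⟨F ∪ F', fun x => ?_⟩
  simp only [Set.mem_union, hF x, hF' x, Finset.mem_union]
  constructor
  · rintro (⟨p, hp, hx⟩ | ⟨p, hp, hx⟩) <;> exact ⟨p, by tauto, hx⟩
  · rintro ⟨p, hp | hp, hx⟩
    · exact Or.inl ⟨p, hp, hx⟩
    · exact Or.inr ⟨p, hp, hx⟩

lemma FinIoc.inter {S T : Set ℝ} (hS : FinIoc S) (hT : FinIoc T) : FinIoc (S ∩ T) := by
  obtain ⟨F, hF⟩ := hS; obtain ⟨F', hF'⟩ := hT
  refine ⟨(F ×ˢ F').image (fun q => (q.1.1 ⊔ q.2.1, q.1.2 ⊓ q.2.2)), fun x => ?_⟩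
  constructor
  · rintro ⟨hxS, hxT⟩
    obtain ⟨p, hp, hx1, hx2⟩ := (hF x).1 hxS
    obtain ⟨q, hq, hy1, hy2⟩ := (hF' x).1 hxT
    refine ⟨(p.1 ⊔ q.1, p.2 ⊓ q.2), ?_, ?_⟩
    · exact Finset.mem_image.2 ⟨(p, q), Finset.mem_product.2 ⟨hp, hq⟩, rfl⟩
    · exact ⟨sup_lt_iff.2 ⟨hx1, hy1⟩, le_inf hx2 hy2⟩
  · rintro ⟨m, hm, hx1, hx2⟩
    obtain ⟨⟨p, q⟩, hpq, rfl⟩ := Finset.mem_image.1 hm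
    obtain ⟨hp, hq⟩ := Finset.mem_product.1 hpq
    simp only [sup_lt_iff, le_inf_iff] at hx1 hx2
    exact ⟨(hF x).2 ⟨p, hp, hx1.1, hx2.1⟩, (hF' x).2 ⟨q, hq, hx1.2, hx2.2⟩⟩

lemma FinIoc.preimage_mul {S : Set ℝ} (hS : FinIoc S) {c : ℝ} (hc : 0 < c) :
    FinIoc ((fun x => x * c) ⁻¹' S) := by
  obtain ⟨F, hF⟩ := hS
  refine ⟨F.image (fun p => (p.1 / c, p.2 / c)), fun x => ?_⟩
  simp only [Set.mem_preimage, hF (x * c)]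
  constructor
  · rintro ⟨p, hp, h1, h2⟩
    exact ⟨(p.1 / c, p.2 / c), Finset.mem_image.2 ⟨p, hp, rfl⟩,
      (div_lt_iff₀ hc).2 h1, (le_div_iff₀ hc).2 h2⟩
  · rintro ⟨m, hm, h1, h2⟩
    obtain ⟨p, hp, rfl⟩ := Finset.mem_image.1 hm
    exact ⟨p, hp, (div_lt_iff₀ hc).1 h1, (le_div_iff₀ hc).1 h2⟩

lemma finIoc_biUnion {ι : Type*} [DecidableEq ι] (s : Finset ι) (f : ι → Set ℝ)
    (h : ∀ i ∈ s, FinIoc (f i)) : FinIoc (⋃ i ∈ s, f i) := by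
  induction s using Finset.induction with
  | empty => simpa using finIoc_empty
  | insert a s hni ih =>
    rw [Finset.set_biUnion_insert]
    exact (h a (Finset.mem_insert_self a s)).union
      (ih fun i hi => h i (Finset.mem_insert_of_mem hi))

lemma finIoc_biInter {ι : Type*} [DecidableEq ι] (s : Finset ι) (hs : s.Nonempty) (f : ι → Set ℝ)
    (h : ∀ i ∈ s, FinIoc (f i)) : FinIoc (⋂ i ∈ s, f i) := by
  induction hs using Finset.Nonempty.cons_induction with
  | singleton i => simpa using h i (by simp)
  | cons a s ha hs ih =>
    rw [Finset.cons_eq_insert, Finset.set_biInter_insert]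
    exact (h a (by simp)).inter (ih fun i hi => h i (by simp [hi]))

/-- aux: bound for right endpoints strictly below b -/
lemma finIoc_bound (F : Finset (ℝ × ℝ)) (b : ℝ) :
    ∃ t, t < b ∧ ∀ p ∈ F, p.2 < b → p.2 ≤ t := by
  induction F using Finset.induction with
  | empty => exact ⟨b - 1, by linarith, by simp⟩
  | insert a s hni ih =>
    obtain ⟨t, ht, hts⟩ := ih
    by_cases ha : a.2 < b
    · refine ⟨max t a.2, max_lt ht ha, ?_⟩
      intro p hp hpb
      rcases Finset.mem_insert.1 hp with rfl | hp
      · exact le_max_right _ _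
      · exact le_trans (hts p hp hpb) (le_max_left _ _)
    · refine ⟨t, ht, ?_⟩
      intro p hp hpb
      rcases Finset.mem_insert.1 hp with rfl | hp
      · exact absurd hpb ha
      · exact hts p hp hpb

lemma finIoc_gap_below {S : Set ℝ} (hS : FinIoc S) {b : ℝ} (hb : b ∉ S) :
    ∃ t, t < b ∧ ∀ x, t < x → x ≤ b → x ∉ S := by
  obtain ⟨F, hF⟩ := hS
  obtain ⟨t, ht, hts⟩ := finIoc_bound F b
  refine ⟨t, ht, fun x hx1 hx2 hxS => ?_⟩
  obtain ⟨p, hp, h1, h2⟩ := (hF x).1 hxS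
  have hpb : ¬ p.2 < b := by
    intro h
    have := hts p hp h
    linarith
  exact hb ((hF b).2 ⟨p, hp, lt_of_lt_of_le h1 hx2, le_of_not_gt hpb⟩)

lemma finIoc_run {S : Set ℝ} (hS : FinIoc S) {c : ℝ}
    (h : ∀ t, t < c → ∃ x, t < x ∧ x ≤ c ∧ x ∈ S) :
    ∃ u, u < c ∧ ∀ x, u < x → x ≤ c → x ∈ S := by
  obtain ⟨F, hF⟩ := hS
  obtain ⟨t, ht, hts⟩ := finIoc_bound F c
  obtain ⟨x, hx1, hx2, hxS⟩ := h t ht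
  obtain ⟨p, hp, h1, h2⟩ := (hF x).1 hxS
  have hp2 : c ≤ p.2 := by
    by_contra hlt
    have := hts p hp (lt_of_not_ge hlt)
    linarith
  exact ⟨p.1, lt_of_lt_of_le h1 hx2, fun z hz1 hz2 => (hF z).2 ⟨p, hp, hz1, le_trans hz2 hp2⟩⟩

lemma finIoc_left_open {S : Set ℝ} (hS : FinIoc S) {y : ℝ} (hy : y ∈ S) :
    ∃ δ > 0, ∀ z, y - δ < z → z ≤ y → z ∈ S := by
  obtain ⟨F, hF⟩ := hS
  obtain ⟨p, hp, h1, h2⟩ := (hF y).1 hy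
  refine ⟨y - p.1, by linarith, fun z hz1 hz2 => ?_⟩
  exact (hF z).2 ⟨p, hp, by linarith, le_trans hz2 h2⟩

lemma finIoc_alternation {S : Set ℝ} (hS : FinIoc S) (x y : ℕ → ℝ)
    (hyx : ∀ n, y n < x n) (hrun : ∀ n z, y n < z → z ≤ x n → z ∈ S)
    (hynot : ∀ n, y n ∉ S) (hstep : ∀ n, x (n + 1) ≤ y n) : False := by
  obtain ⟨F, hF⟩ := hS
  have hx : ∀ n, ∃ p ∈ F, x n ∈ Set.Ioc p.1 p.2 :=
    fun n => (hF (x n)).1 (hrun n (x n) (hyx n) le_rfl)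
  choose p hpF hp using hx
  have hanti : ∀ n m, n < m → x m ≤ y n := by
    intro n m hnm
    have h1 : ∀ j, x (j + 1) ≤ x j := fun j => (hstep j).trans (hyx j).le
    have : x m ≤ x (n + 1) := by
      have := antitone_nat_of_succ_le h1 hnm
      exact (antitone_nat_of_succ_le h1) hnm
    exact this.trans (hstep n)
  have : ∃ n m, n ≠ m ∧ p n = p m := by
    have := Finite.exists_ne_map_eq_of_infinite (fun n => (⟨p n, hpF n⟩ : {q // q ∈ F}))
    obtain ⟨n, m, hnm, h⟩ := this
    exact ⟨n, m, hnm, congrArg Subtype.val h⟩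
  obtain ⟨n, m, hnm, hpe⟩ := this
  wlog hlt : n < m generalizing n m
  · exact this m n hnm.symm hpe.symm (hnm.lt_or_gt.resolve_left hlt)
  have h1 : (p n).1 < y n := by
    have := (hp m).1
    rw [← hpe] at this
    exact lt_of_lt_of_le this (hanti n m hlt)
  have h2 : y n ≤ (p n).2 := le_trans (hyx n).le (hp n).2
  exact hynot n ((hF (y n)).2 ⟨p n, hpF n, h1, h2⟩)


section Steps2
variable {k : ℕ}


lemma kGood_mono {G H : Set ℝ} (hGH : G ⊆ H) (hH : kGood k H) : kGood k G :=
  fun ⟨a, r, ha, hr, hmem⟩ => hH ⟨a, r, ha, hr, fun j hj => hGH (hmem j hj)⟩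

lemma kBadWrt_mono {G H : Set ℝ} (hGH : G ⊆ H) {x : ℝ} (h : kBadWrt k G x) :
    kBadWrt k H x := by
  obtain ⟨r, hr, hmem⟩ := h
  exact ⟨r, hr, fun j h1 h2 => hGH (hmem j h1 h2)⟩

lemma cast_r_one_le {r : ℕ} (hr : 2 ≤ r) : (1:ℝ) ≤ (r:ℝ) := by
  exact_mod_cast Nat.one_le_of_lt hr

lemma cast_r_two_le {r : ℕ} (hr : 2 ≤ r) : (2:ℝ) ≤ (r:ℝ) := by exact_mod_cast hr

lemma one_le_pow_r {r : ℕ} (hr : 2 ≤ r) (j : ℕ) : (1:ℝ) ≤ (r:ℝ) ^ j := by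
  calc (1:ℝ) = 1 ^ j := (one_pow j).symm
  _ ≤ (r:ℝ) ^ j := pow_le_pow_left₀ (by norm_num) (cast_r_one_le hr) j

lemma two_le_pow_r {r : ℕ} (hr : 2 ≤ r) {j : ℕ} (hj : 1 ≤ j) : (2:ℝ) ≤ (r:ℝ) ^ j := by
  calc (2:ℝ) ≤ (r:ℝ) := cast_r_two_le hr
  _ ≤ (r:ℝ) ^ j := le_self_pow₀ (cast_r_one_le hr) (by omega)

/-- if the lowest term of a GP lies in `G ⊆ (b,1]` then the whole GP is in `G`. -/
lemma no_gp_from_G {G : Set ℝ} {b t : ℝ} (hG : kGood k G)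
    (hGsub : ∀ x ∈ G, b < x ∧ x ≤ 1) {c₀ : ℝ} {r : ℕ} (hc₀ : 0 < c₀) (hr : 2 ≤ r)
    (hc₀G : c₀ ∈ G) (hmem : ∀ j < k, c₀ * (r:ℝ) ^ j ∈ G ∪ Set.Ioc t b) : False := by
  apply hG
  refine ⟨c₀, r, hc₀, hr, fun j hj => ?_⟩
  rcases hmem j hj with h | h
  · exact h
  · exfalso
    have h1 : b < c₀ := (hGsub c₀ hc₀G).1
    have h2 : c₀ ≤ c₀ * (r:ℝ) ^ j := le_mul_of_one_le_right hc₀.le (one_le_pow_r hr j)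
    have := h.2
    linarith

noncomputable def oddInf (k : ℕ) (G : Set ℝ) (b : ℝ) : ℝ :=
  sInf {t | 0 < t ∧ t < b ∧ kGood k (G ∪ Set.Ioc t b)}

lemma odd_step (hk : 3 ≤ k) {G : Set ℝ} {b : ℝ} (hG : kGood k G)
    (hGsub : ∀ x ∈ G, b < x ∧ x ≤ 1) (hb : 0 < b) (hb1 : b ≤ 1)
    (hnb : ¬ kBadWrt k G b) (hfin : FinIoc G) :
    0 < oddInf k G b ∧ oddInf k G b < b ∧
      kGood k (G ∪ Set.Ioc (oddInf k G b) b) ∧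
      ∀ t, 0 < t → t < oddInf k G b → ¬ kGood k (G ∪ Set.Ioc t b) := by
  set T := {t | 0 < t ∧ t < b ∧ kGood k (G ∪ Set.Ioc t b)} with hT
  -- lower bound for T
  have hlow : ∀ t ∈ T, b / 2 ^ (k - 1) ≤ t := by
    intro t ht
    by_contra hlt
    push_neg at hlt
    apply ht.2.2
    refine ⟨b / 2 ^ (k - 1), 2, by positivity, le_refl 2, fun j hj => ?_⟩
    have h2j : (1:ℝ) ≤ (2:ℝ) ^ j := one_le_pow_r (le_refl 2) j
    have hle : (2:ℝ) ^ j ≤ 2 ^ (k - 1) := by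
      apply pow_le_pow_right₀ (by norm_num)
      omega
    right
    constructor
    · push_cast
      calc t < b / 2 ^ (k - 1) := hlt
      _ ≤ b / 2 ^ (k - 1) * 2 ^ j := le_mul_of_one_le_right (by positivity) h2j
    · push_cast
      rw [div_mul_eq_mul_div, div_le_iff₀ (by positivity)]
      nlinarith [pow_pos (show (0:ℝ) < 2 by norm_num) (k-1)]
  have hbdd : BddBelow T := ⟨b / 2 ^ (k - 1), hlow⟩
  -- nonemptiness
  have hne : T.Nonempty := by
    set Rb := ⌊2 / b⌋₊ with hRb
    set S' := Set.Ioc (b/2) b ∩ ⋃ r ∈ Finset.Icc 2 Rb,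
      ⋂ j ∈ Finset.Icc 1 (k - 1), (fun x => x * (r:ℝ) ^ j) ⁻¹' G with hS'
    have hfinS' : FinIoc S' := by
      apply (finIoc_Ioc _ _).inter
      apply finIoc_biUnion
      intro r hr
      have hr2 : 2 ≤ r := (Finset.mem_Icc.1 hr).1
      apply finIoc_biInter _ ⟨1, Finset.mem_Icc.2 ⟨le_refl 1, by omega⟩⟩
      intro j hj
      exact hfin.preimage_mul (by positivity)
    have hbnot : b ∉ S' := by
      intro hbS
      obtain ⟨-, hmem⟩ := hbS
      simp only [Set.mem_iUnion, Set.mem_iInter, Set.mem_preimage, Finset.mem_Icc] at hmem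
      obtain ⟨r, ⟨hr2, -⟩, hall⟩ := hmem
      exact hnb ⟨r, hr2, fun j h1 h2 => hall j ⟨h1, h2⟩⟩
    obtain ⟨t₁, ht₁, hdisj⟩ := finIoc_gap_below hfinS' hbnot
    set t := max t₁ (b/2) with htdef
    have ht0 : 0 < t := lt_of_lt_of_le (by positivity) (le_max_right _ _)
    have htb : t < b := max_lt ht₁ (by linarith)
    refine ⟨t, ht0, htb, ?_⟩
    rintro ⟨c₀, r, hc₀, hr, hmem⟩
    have h0 : c₀ ∈ G ∪ Set.Ioc t b := by
      have := hmem 0 (by omega)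
      simpa using this
    rcases h0 with h0 | h0
    · exact no_gp_from_G hG hGsub hc₀ hr h0 hmem
    · -- lowest point in the new block
      have hj' : ∀ j, 1 ≤ j → j < k → c₀ * (r:ℝ) ^ j ∈ G := by
        intro j hj1 hjk
        rcases hmem j hjk with h | h
        · exact h
        · exfalso
          have h2 : (2:ℝ) ≤ (r:ℝ) ^ j := two_le_pow_r hr hj1
          have h3 : b / 2 ≤ t := le_max_right _ _
          have h4 : t < c₀ := h0.1
          have h5 : c₀ * (r:ℝ) ^ j ≤ b := h.2
          nlinarith
      have hrk : c₀ * (r:ℝ) ^ (k-1) ≤ 1 := (hGsub _ (hj' (k-1) (by omega) (by omega))).2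
      have hrle : (r:ℝ) ≤ (r:ℝ) ^ (k-1) := le_self_pow₀ (cast_r_one_le hr) (by omega)
      have hRr : r ≤ Rb := by
        apply Nat.le_floor
        have hc2 : b / 2 < c₀ := lt_of_le_of_lt (le_max_right t₁ (b/2)) h0.1
        rw [le_div_iff₀ hb]
        nlinarith [pow_pos (lt_of_lt_of_le one_pos (cast_r_one_le hr)) (k-1)]
      have hc₀S : c₀ ∈ S' := by
        constructor
        · exact ⟨lt_of_le_of_lt (le_max_right t₁ (b/2)) h0.1, h0.2⟩
        · simp only [Set.mem_iUnion, Set.mem_iInter, Set.mem_preimage, Finset.mem_Icc]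
          exact ⟨r, ⟨hr, hRr⟩, fun j hj => hj' j hj.1 (by omega)⟩
      exact hdisj c₀ (lt_of_le_of_lt (le_max_left t₁ (b/2)) h0.1) h0.2 hc₀S
  obtain ⟨t₀, ht₀⟩ := hne
  have hO1 : 0 < oddInf k G b :=
    lt_of_lt_of_le (by positivity) (le_csInf ⟨t₀, ht₀⟩ hlow)
  have hO2 : oddInf k G b < b := lt_of_le_of_lt (csInf_le hbdd ht₀) ht₀.2.1
  have hO4 : ∀ t, 0 < t → t < oddInf k G b → ¬ kGood k (G ∪ Set.Ioc t b) := by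
    intro t ht hlt hgood
    exact absurd (csInf_le hbdd ⟨ht, lt_trans hlt hO2, hgood⟩) (not_le.2 hlt)
  refine ⟨hO1, hO2, ?_, hO4⟩
  -- attainment
  intro hbad
  obtain ⟨c₀, r, hc₀, hr, hmem⟩ := hbad
  have h0 : c₀ ∈ G ∪ Set.Ioc (oddInf k G b) b := by
    have := hmem 0 (by omega); simpa using this
  rcases h0 with h0 | h0
  · exact no_gp_from_G hG hGsub hc₀ hr h0 hmem
  · obtain ⟨t', ht'T, ht'⟩ := exists_lt_of_csInf_lt ⟨t₀, ht₀⟩ h0.1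
    apply ht'T.2.2
    refine ⟨c₀, r, hc₀, hr, fun j hj => ?_⟩
    rcases hmem j hj with h | h
    · exact Or.inl h
    · right
      refine ⟨lt_of_lt_of_le ht' ?_, h.2⟩
      exact le_mul_of_one_le_right hc₀.le (one_le_pow_r hr j)


lemma bridge (hk : 3 ≤ k) {G : Set ℝ} {b c : ℝ}
    (hGsub : ∀ x ∈ G, b < x ∧ x ≤ 1) (hc : 0 < c) (hcb : c < b)
    (O3 : kGood k (G ∪ Set.Ioc c b))
    (O4 : ∀ t, 0 < t → t < c → ¬ kGood k (G ∪ Set.Ioc t b)) :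
    ∀ t, t < c → ∃ x, t < x ∧ x ≤ c ∧ kBadWrt k (G ∪ Set.Ioc c b) x := by
  intro t ht
  set t' := max t (c/2) with ht'
  have ht'c : t' < c := max_lt ht (by linarith)
  have ht'0 : 0 < t' := lt_of_lt_of_le (by positivity) (le_max_right _ _)
  have hng := O4 t' ht'0 ht'c
  rw [kGood] at hng
  push_neg at hng
  obtain ⟨c₀, r, hc₀, hr, hmem⟩ := hng
  have hc₀c : c₀ ≤ c := by
    by_contra hgt
    push_neg at hgt
    apply O3
    refine ⟨c₀, r, hc₀, hr, fun j hj => ?_⟩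
    rcases hmem j hj with h | h
    · exact Or.inl h
    · refine Or.inr ⟨?_, h.2⟩
      calc c < c₀ := hgt
      _ ≤ c₀ * (r:ℝ) ^ j := le_mul_of_one_le_right hc₀.le (one_le_pow_r hr j)
  have h0 : c₀ ∈ G ∪ Set.Ioc t' b := by
    have := hmem 0 (by omega); simpa using this
  rcases h0 with h0 | h0
  · exact absurd ((hGsub c₀ h0).1) (by linarith)
  · refine ⟨c₀, lt_of_le_of_lt (le_max_left _ _) h0.1, hc₀c, r, hr, fun j h1 h2 => ?_⟩
    rcases hmem j (by omega) with h | h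
    · exact Or.inl h
    · refine Or.inr ⟨?_, h.2⟩
      have h2j : (2:ℝ) ≤ (r:ℝ) ^ j := two_le_pow_r hr h1
      have h3 : c / 2 ≤ t' := le_max_right _ _
      nlinarith [h.1, h0.1]

noncomputable def evenInf (k : ℕ) (G' : Set ℝ) (c : ℝ) : ℝ :=
  sInf {t | 0 < t ∧ t < c ∧ ∀ x, t < x → x ≤ c → kBadWrt k G' x}

lemma even_step (hk : 3 ≤ k) {G' : Set ℝ} {c : ℝ} (hG' : kGood k G')
    (hsub : ∀ x ∈ G', c < x ∧ x ≤ 1) (hc : 0 < c) (hc1 : c < 1) (hfin : FinIoc G')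
    (hdens : ∀ t, t < c → ∃ x, t < x ∧ x ≤ c ∧ kBadWrt k G' x) :
    0 < evenInf k G' c ∧ evenInf k G' c < c ∧
      (∀ x, evenInf k G' c < x → x ≤ c → kBadWrt k G' x) ∧
      ¬ kBadWrt k G' (evenInf k G' c) := by
  set U := {t | 0 < t ∧ t < c ∧ ∀ x, t < x → x ≤ c → kBadWrt k G' x} with hU
  have hfwd : ∀ x, x ≤ c → kBadWrt k G' x →
      c ^ 2 < x ∧ ∃ r, 2 ≤ r ∧ r ≤ ⌊1/c⌋₊ ∧ ∀ j, 1 ≤ j → j ≤ k - 1 → x * (r:ℝ) ^ j ∈ G' := by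
    intro x hxc ⟨r, hr, hj⟩
    have h1 : x * (r:ℝ) ^ 1 ∈ G' := hj 1 le_rfl (by omega)
    have h2 : x * (r:ℝ) ^ 2 ∈ G' := hj 2 (by omega) (by omega)
    have hr0 : (0:ℝ) < (r:ℝ) := lt_of_lt_of_le zero_lt_one (cast_r_one_le hr)
    have hxr : c < x * (r:ℝ) := by have := (hsub _ h1).1; rwa [pow_one] at this
    have hxr2 : x * (r:ℝ) ^ 2 ≤ 1 := (hsub _ h2).2
    have hx0 : 0 < x := by nlinarith
    have hcr : c * (r:ℝ) < 1 := by nlinarith [sq_nonneg ((r:ℝ))]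
    have hrlt : (r:ℝ) < 1 / c := by rw [lt_div_iff₀ hc]; linarith [mul_comm c (r:ℝ)]
    refine ⟨?_, r, hr, Nat.le_floor hrlt.le, fun j ha hb => hj j ha hb⟩
    nlinarith
  set Rc := ⌊1/c⌋₊ with hRc
  set S'' := Set.Ioc (c^2) c ∩ ⋃ r ∈ Finset.Icc 2 Rc,
      ⋂ j ∈ Finset.Icc 1 (k - 1), (fun x => x * (r:ℝ) ^ j) ⁻¹' G' with hS''
  have hfinS : FinIoc S'' := by
    apply (finIoc_Ioc _ _).inter
    apply finIoc_biUnion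
    intro r hr
    have hr2 : 2 ≤ r := (Finset.mem_Icc.1 hr).1
    apply finIoc_biInter _ ⟨1, Finset.mem_Icc.2 ⟨le_refl 1, by omega⟩⟩
    intro j hj
    exact hfin.preimage_mul (by positivity)
  have hSbad : ∀ x ∈ S'', kBadWrt k G' x := by
    rintro x ⟨-, hx⟩
    simp only [Set.mem_iUnion, Set.mem_iInter, Set.mem_preimage, Finset.mem_Icc] at hx
    obtain ⟨r, ⟨hr2, -⟩, hall⟩ := hx
    exact ⟨r, hr2, fun j ha hb => hall j ⟨ha, hb⟩⟩
  have hbadS : ∀ x, x ≤ c → kBadWrt k G' x → x ∈ S'' := by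
    intro x hxc hbad
    obtain ⟨hgt, r, hr2, hrR, hall⟩ := hfwd x hxc hbad
    refine ⟨⟨hgt, hxc⟩, ?_⟩
    simp only [Set.mem_iUnion, Set.mem_iInter, Set.mem_preimage, Finset.mem_Icc]
    exact ⟨r, ⟨hr2, hrR⟩, fun j hj => hall j hj.1 hj.2⟩
  have hrun := finIoc_run hfinS (fun t ht => by
    obtain ⟨x, hx1, hx2, hx3⟩ := hdens t ht
    exact ⟨x, hx1, hx2, hbadS x hx2 hx3⟩)
  obtain ⟨u, huc, hrun⟩ := hrun
  have hUne : (max u (c^2)) ∈ U := by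
    refine ⟨lt_of_lt_of_le (by positivity) (le_max_right _ _),
      max_lt huc (by nlinarith), fun x hx1 hx2 => ?_⟩
    exact hSbad x (hrun x (lt_of_le_of_lt (le_max_left _ _) hx1) hx2)
  have hlowU : ∀ t ∈ U, c ^ 2 ≤ t := by
    intro t htU
    by_contra hlt
    push_neg at hlt
    have hbadc2 := htU.2.2 (c^2) hlt (by nlinarith)
    have := (hfwd (c^2) (by nlinarith) hbadc2).1
    linarith
  have hbddU : BddBelow U := ⟨c^2, hlowU⟩
  have hE1 : 0 < evenInf k G' c :=
    lt_of_lt_of_le (by positivity) (le_csInf ⟨_, hUne⟩ hlowU)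
  have hE2 : evenInf k G' c < c :=
    lt_of_le_of_lt (csInf_le hbddU hUne) (max_lt huc (by nlinarith))
  have hE3 : ∀ x, evenInf k G' c < x → x ≤ c → kBadWrt k G' x := by
    intro x hx1 hx2
    obtain ⟨t, htU, htx⟩ := exists_lt_of_csInf_lt ⟨_, hUne⟩ hx1
    exact htU.2.2 x htx hx2
  refine ⟨hE1, hE2, hE3, ?_⟩
  rintro ⟨r, hr, hj⟩
  set d := evenInf k G' c with hd
  have hr0 : (0:ℝ) < (r:ℝ) := lt_of_lt_of_le zero_lt_one (cast_r_one_le hr)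
  have claim : ∀ s : Finset ℕ, (∀ j ∈ s, d * (r:ℝ) ^ j ∈ G') →
      ∃ ε > 0, ∀ x, d - ε < x → x ≤ d → ∀ j ∈ s, x * (r:ℝ) ^ j ∈ G' := by
    intro s
    induction s using Finset.induction with
    | empty => exact fun _ => ⟨1, zero_lt_one, by simp⟩
    | @insert j₀ s hni ih =>
      intro hmem
      obtain ⟨ε₁, hε₁, h₁⟩ := ih (fun j hj => hmem j (Finset.mem_insert_of_mem hj))
      have hy : d * (r:ℝ) ^ j₀ ∈ G' := hmem j₀ (Finset.mem_insert_self _ _)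
      obtain ⟨δ, hδ, hδG⟩ := finIoc_left_open hfin hy
      have hrj : (0:ℝ) < (r:ℝ) ^ j₀ := by positivity
      refine ⟨min ε₁ (δ / (r:ℝ) ^ j₀), lt_min hε₁ (by positivity), fun x hx1 hx2 j hjmem => ?_⟩
      rcases Finset.mem_insert.1 hjmem with rfl | hjs
      · apply hδG
        · have : d - δ / (r:ℝ) ^ j < x := by
            have := min_le_right ε₁ (δ / (r:ℝ) ^ j)
            linarith
          calc d * (r:ℝ) ^ j - δ = (d - δ / (r:ℝ) ^ j) * (r:ℝ) ^ j := by
                field_simp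
          _ < x * (r:ℝ) ^ j := by
                apply mul_lt_mul_of_pos_right this hrj
        · exact mul_le_mul_of_nonneg_right hx2 hrj.le
      · exact h₁ x (by have := min_le_left ε₁ (δ / (r:ℝ) ^ j₀); linarith) hx2 j hjs
  obtain ⟨ε, hε, hεG⟩ := claim (Finset.Icc 1 (k-1)) (fun j hjm => by
    have := Finset.mem_Icc.1 hjm
    exact hj j this.1 this.2)
  set ε' := min ε (d/2) with hε'
  have hε'0 : 0 < ε' := lt_min hε (by linarith)
  have ht'U : d - ε' ∈ U := by
    refine ⟨?_, by linarith, fun x hx1 hx2 => ?_⟩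
    · have : ε' ≤ d / 2 := min_le_right _ _
      linarith
    rcases le_or_gt x d with hxd | hxd
    · refine ⟨r, hr, fun j h1 h2 => ?_⟩
      apply hεG x ?_ hxd j (Finset.mem_Icc.2 ⟨h1, h2⟩)
      have : ε' ≤ ε := min_le_left _ _
      linarith
    · exact hE3 x hxd hx2
  have h2 := csInf_le hbddU ht'U
  have hdU : sInf U = d := rfl
  rw [hdU] at h2
  linarith
end Steps2

noncomputable def stG (k : ℕ) : ℕ → ℝ × Set ℝ
  | 0 => (1, ∅)
  | n + 1 =>
    let b := (stG k n).1
    let G := (stG k n).2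
    let c := oddInf k G b
    (evenInf k (G ∪ Set.Ioc c b) c, G ∪ Set.Ioc c b)

noncomputable def bN (k n : ℕ) : ℝ := (stG k n).1
noncomputable def GN (k n : ℕ) : Set ℝ := (stG k n).2
noncomputable def cN (k n : ℕ) : ℝ := oddInf k (GN k n) (bN k n)

lemma bN_zero (k : ℕ) : bN k 0 = 1 := rfl
lemma cN_def (k n : ℕ) : cN k n = oddInf k (GN k n) (bN k n) := rfl
lemma GN_zero (k : ℕ) : GN k 0 = ∅ := rfl
lemma GN_succ (k n : ℕ) : GN k (n+1) = GN k n ∪ Set.Ioc (cN k n) (bN k n) := rfl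
lemma bN_succ (k n : ℕ) : bN k (n+1) = evenInf k (GN k (n+1)) (cN k n) := rfl

def InvP (k n : ℕ) : Prop :=
  0 < bN k n ∧ bN k n ≤ 1 ∧ (∀ x ∈ GN k n, bN k n < x ∧ x ≤ 1) ∧
    kGood k (GN k n) ∧ ¬ kBadWrt k (GN k n) (bN k n) ∧ FinIoc (GN k n)

def StepOut (k n : ℕ) : Prop :=
  0 < cN k n ∧ cN k n < bN k n ∧ kGood k (GN k (n+1)) ∧
    (∀ x ∈ GN k (n+1), cN k n < x ∧ x ≤ 1) ∧
    (∀ t, 0 < t → t < cN k n → ¬ kGood k (GN k n ∪ Set.Ioc t (bN k n))) ∧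
    0 < bN k (n+1) ∧ bN k (n+1) < cN k n ∧
    (∀ x, bN k (n+1) < x → x ≤ cN k n → kBadWrt k (GN k (n+1)) x) ∧
    ¬ kBadWrt k (GN k (n+1)) (bN k (n+1))

lemma step_all {k : ℕ} (hk : 3 ≤ k) (n : ℕ) (h : InvP k n) : StepOut k n ∧ InvP k (n+1) := by
  obtain ⟨hb0, hb1, hsub, hgood, hnbad, hfin⟩ := h
  obtain ⟨O1, O2, O3, O4⟩ := odd_step hk hgood hsub hb0 hb1 hnbad hfin
  rw [← cN_def] at O1 O2 O3 O4
  rw [← GN_succ] at O3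
  have hsub' : ∀ x ∈ GN k (n+1), cN k n < x ∧ x ≤ 1 := by
    rw [GN_succ]
    rintro x (hx | hx)
    · exact ⟨lt_trans O2 (hsub x hx).1, (hsub x hx).2⟩
    · exact ⟨hx.1, le_trans hx.2 hb1⟩
  have hfin' : FinIoc (GN k (n+1)) := by
    rw [GN_succ]; exact hfin.union (finIoc_Ioc _ _)
  have hc1 : cN k n < 1 := lt_of_lt_of_le O2 hb1
  have hdens : ∀ t, t < cN k n → ∃ x, t < x ∧ x ≤ cN k n ∧ kBadWrt k (GN k (n+1)) x := by
    have := bridge hk hsub O1 O2 (by rw [GN_succ] at O3; exact O3) O4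
    rw [← GN_succ] at this
    exact this
  have heven := even_step hk O3 hsub' O1 hc1 hfin' hdens
  rw [← bN_succ] at heven
  obtain ⟨E1, E2, E3, E4⟩ := heven
  refine ⟨⟨O1, O2, O3, hsub', O4, E1, E2, E3, E4⟩, E1, ?_, ?_, O3, E4, hfin'⟩
  · exact le_of_lt (lt_trans E2 hc1)
  · intro x hx
    exact ⟨lt_trans E2 (hsub' x hx).1, (hsub' x hx).2⟩

lemma inv_all {k : ℕ} (hk : 3 ≤ k) : ∀ n, InvP k n := by
  intro n
  induction n with
  | zero =>
    refine ⟨one_pos, le_refl 1, by simp [GN_zero], ?_, ?_, by rw [GN_zero]; exact finIoc_empty⟩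
    · rintro ⟨a, r, ha, hr, hmem⟩
      exact (hmem 0 (by omega) : a * _ ∈ (∅ : Set ℝ))
    · rintro ⟨r, hr, hmem⟩
      exact (hmem 1 le_rfl (by omega) : _ ∈ (∅ : Set ℝ))
  | succ n ih => exact (step_all hk n ih).2

lemma stepOut_all {k : ℕ} (hk : 3 ≤ k) (n : ℕ) : StepOut k n :=
  (step_all hk n (inv_all hk n)).1


section Assembly
variable {k : ℕ}

noncomputable def seqA (k m : ℕ) : ℝ := if m % 2 = 0 then bN k (m / 2) else cN k (m / 2)

lemma seqA_two_mul (k i : ℕ) : seqA k (2 * i) = bN k i := by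
  have h1 : (2 * i) % 2 = 0 := by omega
  have h2 : (2 * i) / 2 = i := by omega
  simp [seqA, h1, h2]

lemma seqA_two_mul_add_one (k i : ℕ) : seqA k (2 * i + 1) = cN k i := by
  have h1 : (2 * i + 1) % 2 = 1 := by omega
  have h2 : (2 * i + 1) / 2 = i := by omega
  simp [seqA, h1, h2]

lemma seqA_two_mul_add_two (k i : ℕ) : seqA k (2 * i + 2) = bN k (i + 1) := by
  have h : 2 * i + 2 = 2 * (i + 1) := by ring
  rw [h, seqA_two_mul]

lemma seqA_zero (k : ℕ) : seqA k 0 = 1 := by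
  have : (0:ℕ) % 2 = 0 := rfl
  simp [seqA, this, bN_zero]

lemma seqA_strictAnti (hk : 3 ≤ k) : StrictAnti (seqA k) := by
  apply strictAnti_nat_of_succ_lt
  intro m
  rcases Nat.even_or_odd m with ⟨n, rfl⟩ | ⟨n, rfl⟩
  · rw [show n + n = 2 * n from by omega]
    rw [seqA_two_mul_add_one, seqA_two_mul]
    exact (stepOut_all hk n).2.1
  · rw [show 2 * n + 1 + 1 = 2 * n + 2 from rfl]
    rw [seqA_two_mul_add_two, seqA_two_mul_add_one]
    exact (stepOut_all hk n).2.2.2.2.2.2.1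

lemma seqA_lt_index (hk : 3 ≤ k) {p q : ℕ} (h : seqA k q < seqA k p) : p < q := by
  by_contra hge
  push_neg at hge
  exact absurd ((seqA_strictAnti hk).antitone hge) (not_le.2 h)

lemma GN_eq (k n : ℕ) : GN k n = ⋃ i ∈ Finset.range n, Set.Ioc (cN k i) (bN k i) := by
  induction n with
  | zero => simp [GN_zero]
  | succ n ih =>
    rw [GN_succ, ih, Finset.range_add_one, Finset.set_biUnion_insert]
    exact (Set.union_comm _ _).symm

lemma block_subset_GN {k : ℕ} (i n : ℕ) (h : i < n) :
    Set.Ioc (cN k i) (bN k i) ⊆ GN k n := by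
  rw [GN_eq]
  exact fun z hz => Set.mem_biUnion (Finset.mem_range.2 h) hz

lemma GN_subset_Ginf (k n : ℕ) :
    GN k n ⊆ ⋃ i : ℕ, Set.Ioc (seqA k (2 * i + 1)) (seqA k (2 * i)) := by
  rw [GN_eq]
  intro z hz
  simp only [Set.mem_iUnion, Finset.mem_range, exists_prop] at hz ⊢
  obtain ⟨i, -, hzi⟩ := hz
  exact ⟨i, by rw [seqA_two_mul_add_one, seqA_two_mul]; exact hzi⟩

lemma exists_seqA_lt (hk : 3 ≤ k) {x : ℝ} (hx : 0 < x) : ∃ m, seqA k m < x := by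
  by_contra hcon
  push_neg at hcon
  have hbdd : BddBelow (Set.range (seqA k)) := ⟨x, by rintro y ⟨m, rfl⟩; exact hcon m⟩
  set L := ⨅ m, seqA k m with hL
  have hLx : x ≤ L := le_ciInf hcon
  have hL0 : 0 < L := lt_of_lt_of_le hx hLx
  have hLle : ∀ m, L ≤ seqA k m := fun m => ciInf_le hbdd m
  obtain ⟨m₀, hm₀⟩ := exists_lt_of_ciInf_lt (show ⨅ m, seqA k m < 2 * L by rw [← hL]; linarith)
  set RL := ⌊1 / L⌋₊ with hRL
  set SL := ⋃ r ∈ Finset.Icc 2 RL, ⋂ j ∈ Finset.Icc 1 (k - 1),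
      (fun y => y * (r : ℝ) ^ j) ⁻¹' (GN k m₀) with hSL
  have hfinSL : FinIoc SL := by
    apply finIoc_biUnion
    intro r hr
    have hr2 : 2 ≤ r := (Finset.mem_Icc.1 hr).1
    apply finIoc_biInter _ ⟨1, Finset.mem_Icc.2 ⟨le_rfl, by omega⟩⟩
    intro j hj
    exact ((inv_all hk m₀).2.2.2.2.2).preimage_mul (by positivity)
  have hSLmem : ∀ z, z ∈ SL ↔ ∃ r, (2 ≤ r ∧ r ≤ RL) ∧
      ∀ j, 1 ≤ j → j ≤ k - 1 → z * (r : ℝ) ^ j ∈ GN k m₀ := by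
    intro z
    rw [hSL]
    simp only [Set.mem_iUnion, Set.mem_iInter, Set.mem_preimage, Finset.mem_Icc]
    constructor
    · rintro ⟨r, hr, h⟩; exact ⟨r, hr, fun j h1 h2 => h j ⟨h1, h2⟩⟩
    · rintro ⟨r, hr, h⟩; exact ⟨r, hr, fun j hj => h j hj.1 hj.2⟩
  have hkey : ∀ n v, v ∈ GN k n → 2 * L < v → v ∈ GN k m₀ := by
    intro n v hv h2l
    rw [GN_eq] at hv
    simp only [Set.mem_iUnion, Finset.mem_range, exists_prop] at hv
    obtain ⟨i, hin, hvi⟩ := hv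
    have hlt : seqA k m₀ < seqA k (2 * i) := by
      rw [seqA_two_mul]
      have := hvi.2
      linarith
    have h2i : 2 * i < m₀ := seqA_lt_index hk hlt
    exact block_subset_GN i m₀ (by omega) hvi
  have hkey2 : ∀ n v, v ∈ GN k m₀ → bN k (n + 1) < v → v ∈ GN k (n + 1) := by
    intro n v hv hgt
    rw [GN_eq] at hv
    simp only [Set.mem_iUnion, Finset.mem_range, exists_prop] at hv
    obtain ⟨i, hin, hvi⟩ := hv
    have hlt : seqA k (2 * n + 2) < seqA k (2 * i) := by
      rw [seqA_two_mul, seqA_two_mul_add_two]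
      have := hvi.2
      linarith
    have h2i : 2 * i < 2 * n + 2 := seqA_lt_index hk hlt
    exact block_subset_GN i (n + 1) (by omega) hvi
  have hgap : ∀ n z, bN k (n + 1) < z → z ≤ cN k n → z ∈ SL := by
    intro n z h1 h2
    obtain ⟨S1, S2, S3, S4, S5, S6, S7, S8, S9⟩ := stepOut_all hk n
    obtain ⟨r, hr, hjm⟩ := S8 z h1 h2
    have hz0 : 0 < z := lt_trans S6 h1
    have hzL : L < z := by
      have := hLle (2 * n + 2)
      rw [seqA_two_mul_add_two] at this
      linarith
    have hr1 : z * (r : ℝ) ^ 1 ∈ GN k (n + 1) := hjm 1 le_rfl (by omega)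
    have hr2 : z * (r : ℝ) ^ 2 ∈ GN k (n + 1) := hjm 2 (by omega) (by omega)
    have hgt : cN k n < z * (r : ℝ) ^ 1 := (S4 _ hr1).1
    have hle1 : z * (r : ℝ) ^ 2 ≤ 1 := (S4 _ hr2).2
    have hrpos : (0 : ℝ) < (r : ℝ) := lt_of_lt_of_le zero_lt_one (cast_r_one_le hr)
    have hcnL : L ≤ cN k n := by
      have := hLle (2 * n + 1)
      rwa [seqA_two_mul_add_one] at this
    have hrlt : (r : ℝ) < 1 / L := by
      rw [lt_div_iff₀ hL0]
      have hq : cN k n * (r : ℝ) < z * (r : ℝ) ^ 2 := by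
        have he : z * (r : ℝ) ^ 2 = (z * (r : ℝ) ^ 1) * (r : ℝ) := by ring
        rw [he]
        exact mul_lt_mul_of_pos_right hgt hrpos
      nlinarith
    have hrRL : r ≤ RL := Nat.le_floor hrlt.le
    rw [hSLmem]
    refine ⟨r, ⟨hr, hrRL⟩, fun j hj1 hj2 => ?_⟩
    apply hkey (n + 1) _ (hjm j hj1 hj2)
    have h2r : (2 : ℝ) ≤ (r : ℝ) ^ j := two_le_pow_r hr hj1
    nlinarith
  have hnot : ∀ n, bN k (n + 1) ∉ SL := by
    intro n hmem
    obtain ⟨S1, S2, S3, S4, S5, S6, S7, S8, S9⟩ := stepOut_all hk n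
    rw [hSLmem] at hmem
    obtain ⟨r, ⟨hr2, -⟩, hjm⟩ := hmem
    apply S9
    refine ⟨r, hr2, fun j h1 h2 => ?_⟩
    apply hkey2 n _ (hjm j h1 h2)
    have h2r : (2 : ℝ) ≤ (r : ℝ) ^ j := two_le_pow_r hr2 h1
    nlinarith
  exact finIoc_alternation hfinSL (fun n => cN k n) (fun n => bN k (n + 1))
    (fun n => (stepOut_all hk n).2.2.2.2.2.2.1) hgap hnot
    (fun n => ((stepOut_all hk (n + 1)).2.1).le)

lemma uniq (hk : 3 ≤ k) (b : ℕ → ℝ) (hpos : ∀ i, 0 < b i) (hanti : StrictAnti b)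
    (hb0 : b 0 = 1)
    (hgood : kGood k (⋃ i : ℕ, Set.Ioc (b (2 * i + 1)) (b (2 * i))))
    (hbadEq : Bad k (⋃ i : ℕ, Set.Ioc (b (2 * i + 1)) (b (2 * i))) =
      ⋃ i : ℕ, Set.Ioc (b (2 * i + 2)) (b (2 * i + 1))) :
    ∀ m, b m = seqA k m := by
  set Gb := ⋃ i : ℕ, Set.Ioc (b (2 * i + 1)) (b (2 * i)) with hGb
  intro m
  induction m using Nat.strong_induction_on with
  | _ m ih =>
  match m with
  | 0 => rw [hb0, seqA_zero]
  | (m' + 1) =>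
    have ihlt : ∀ j, j ≤ m' → b j = seqA k j := fun j hj => ih j (by omega)
    rcases Nat.even_or_odd m' with ⟨n, hn⟩ | ⟨n, hn⟩
    · -- m' = n + n, so m = 2n+1 : odd case
      have hm : m' + 1 = 2 * n + 1 := by omega
      rw [hm, seqA_two_mul_add_one]
      have hbn : b (2 * n) = bN k n := by
        rw [ihlt (2 * n) (by omega), seqA_two_mul]
      obtain ⟨S1, S2, S3, S4, S5, S6, S7, S8, S9⟩ := stepOut_all hk n
      have hblocks : ∀ i, i < n →
          Set.Ioc (cN k i) (bN k i) = Set.Ioc (b (2 * i + 1)) (b (2 * i)) := by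
        intro i hi
        rw [ihlt (2 * i + 1) (by omega), ihlt (2 * i) (by omega),
          seqA_two_mul_add_one, seqA_two_mul]
      have hGNsub : GN k n ⊆ Gb := by
        rw [GN_eq]
        intro z hz
        simp only [Set.mem_iUnion, Finset.mem_range, exists_prop] at hz
        obtain ⟨i, hin, hzi⟩ := hz
        rw [hblocks i hin] at hzi
        exact Set.mem_iUnion.2 ⟨i, hzi⟩
      rcases lt_trichotomy (b (2 * n + 1)) (cN k n) with hlt | heq | hgt
      · exfalso
        apply S5 (b (2 * n + 1)) (hpos _) hlt
        apply kGood_mono _ hgood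
        rintro z (hz | hz)
        · exact hGNsub hz
        · rw [← hbn] at hz
          exact Set.mem_iUnion.2 ⟨n, hz⟩
      · exact heq
      · exfalso
        have hxBad : b (2 * n + 1) ∈ Bad k Gb := by
          rw [hbadEq]
          exact Set.mem_iUnion.2 ⟨n, ⟨hanti (by omega : 2 * n + 1 < 2 * n + 2), le_rfl⟩⟩
        obtain ⟨-, r, hr, hjm⟩ := hxBad
        apply S3
        refine ⟨b (2 * n + 1), r, hpos _, hr, fun j hj => ?_⟩
        rcases Nat.eq_zero_or_pos j with rfl | hj1
        · rw [GN_succ]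
          right
          rw [pow_zero, mul_one]
          refine ⟨hgt, ?_⟩
          rw [← hbn]
          exact (hanti (by omega : 2 * n < 2 * n + 1)).le
        · have hv := hjm j hj1 (by omega)
          obtain ⟨i, hvi⟩ := Set.mem_iUnion.1 hv
          have hx0 : 0 < b (2 * n + 1) := hpos _
          have hvx : b (2 * n + 1) < b (2 * n + 1) * (r : ℝ) ^ j := by
            nlinarith [two_le_pow_r hr hj1]
          have h2i : 2 * i < 2 * n + 1 :=
            hanti.lt_iff_gt.mp (lt_of_lt_of_le hvx hvi.2)
          have hi_n : i ≤ n := by omega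
          rcases lt_or_eq_of_le hi_n with hin | rfl
          · rw [GN_succ]
            left
            rw [← hblocks i hin] at hvi
            exact block_subset_GN i n hin hvi
          · rw [GN_succ]
            right
            refine ⟨lt_trans hgt hvi.1, ?_⟩
            rw [← hbn]
            exact hvi.2
    · -- m' = 2n+1, so m = 2n+2 : even case
      have hm : m' + 1 = 2 * n + 2 := by omega
      rw [hm, seqA_two_mul_add_two]
      have hbn : b (2 * n) = bN k n := by
        rw [ihlt (2 * n) (by omega), seqA_two_mul]
      have hcn : b (2 * n + 1) = cN k n := by
        rw [ihlt (2 * n + 1) (by omega), seqA_two_mul_add_one]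
      obtain ⟨S1, S2, S3, S4, S5, S6, S7, S8, S9⟩ := stepOut_all hk n
      have hblocks : ∀ i, i < n + 1 →
          Set.Ioc (cN k i) (bN k i) = Set.Ioc (b (2 * i + 1)) (b (2 * i)) := by
        intro i hi
        rcases lt_or_eq_of_le (by omega : i ≤ n) with hin | rfl
        · rw [ihlt (2 * i + 1) (by omega), ihlt (2 * i) (by omega),
            seqA_two_mul_add_one, seqA_two_mul]
        · rw [hbn, hcn]
      have hGNsub : GN k (n + 1) ⊆ Gb := by
        rw [GN_eq]
        intro z hz
        simp only [Set.mem_iUnion, Finset.mem_range, exists_prop] at hz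
        obtain ⟨i, hin, hzi⟩ := hz
        rw [hblocks i hin] at hzi
        exact Set.mem_iUnion.2 ⟨i, hzi⟩
      rcases lt_trichotomy (b (2 * n + 2)) (bN k (n + 1)) with hlt | heq | hgt
      · exfalso
        set d := bN k (n + 1) with hd
        have hdBad : d ∈ Bad k Gb := by
          rw [hbadEq]
          refine Set.mem_iUnion.2 ⟨n, ⟨hlt, ?_⟩⟩
          rw [hcn]
          exact S7.le
        obtain ⟨-, r, hr, hjm⟩ := hdBad
        apply S9
        refine ⟨r, hr, fun j h1 h2 => ?_⟩
        have hv := hjm j h1 h2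
        obtain ⟨i, hvi⟩ := Set.mem_iUnion.1 hv
        have hvx : d < d * (r : ℝ) ^ j := by
          nlinarith [two_le_pow_r hr h1, S6]
        have h2i : 2 * i < 2 * n + 2 :=
          hanti.lt_iff_gt.mp (lt_trans hlt (lt_of_lt_of_le hvx hvi.2))
        rw [← hblocks i (by omega)] at hvi
        exact block_subset_GN i (n + 1) (by omega) hvi
      · exact heq
      · exfalso
        have hle : b (2 * n + 2) ≤ cN k n := by
          rw [← hcn]
          exact (hanti (by omega : 2 * n + 1 < 2 * n + 2)).le
        obtain ⟨r, hr, hjm⟩ := S8 (b (2 * n + 2)) hgt hle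
        apply hgood
        refine ⟨b (2 * n + 2), r, hpos _, hr, fun j hj => ?_⟩
        rcases Nat.eq_zero_or_pos j with rfl | hj1
        · rw [pow_zero, mul_one]
          refine Set.mem_iUnion.2 ⟨n + 1, ?_⟩
          exact ⟨hanti (by omega), le_rfl⟩
        · exact hGNsub (hjm j hj1 (by omega))

end Assembly

/-- Here `a i` denotes the term `a_{i+1}` of the paper, so that
`G = ⋃_{i ≥ 1} (a_{2i}, a_{2i-1}] = ⋃_{i ≥ 0} (a (2i+1), a (2i)]` and
`Bad G = ⋃_{i ≥ 1} (a_{2i+1}, a_{2i}] = ⋃_{i ≥ 0} (a (2i+2), a (2i+1)]`. -/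
theorem stmt_8 (k : ℕ) (hk : 3 ≤ k) :
    ∃! a : ℕ → ℝ,
      (∀ i, 0 < a i) ∧ StrictAnti a ∧ a 0 = 1 ∧
      kGood k (⋃ i : ℕ, Set.Ioc (a (2 * i + 1)) (a (2 * i))) ∧
      Bad k (⋃ i : ℕ, Set.Ioc (a (2 * i + 1)) (a (2 * i))) =
        ⋃ i : ℕ, Set.Ioc (a (2 * i + 2)) (a (2 * i + 1)) := by
  refine ⟨seqA k, ⟨?_, seqA_strictAnti hk, seqA_zero k, ?_, ?_⟩, ?_⟩
  · -- positivity
    intro i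
    rcases Nat.even_or_odd i with ⟨n, rfl⟩ | ⟨n, rfl⟩
    · rw [show n + n = 2 * n from by omega, seqA_two_mul]
      exact (inv_all hk n).1
    · rw [seqA_two_mul_add_one]
      exact (stepOut_all hk n).1
  · -- kGood
    rintro ⟨a, r, ha, hr, hmem⟩
    have hch : ∀ j, ∃ i, j < k → a * (r : ℝ) ^ j ∈ Set.Ioc (cN k i) (bN k i) := by
      intro j
      by_cases hj : j < k
      · obtain ⟨i, hi⟩ := Set.mem_iUnion.1 (hmem j hj)
        rw [seqA_two_mul_add_one, seqA_two_mul] at hi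
        exact ⟨i, fun _ => hi⟩
      · exact ⟨0, fun h => absurd h hj⟩
    choose I hI using hch
    apply (inv_all hk ((Finset.range k).sup I + 1)).2.2.2.1
    refine ⟨a, r, ha, hr, fun j hj => ?_⟩
    refine block_subset_GN (I j) _ ?_ (hI j hj)
    have : I j ≤ (Finset.range k).sup I := Finset.le_sup (Finset.mem_range.2 hj)
    omega
  · -- Bad equality
    ext z
    constructor
    · rintro ⟨⟨⟨hz0, hz1⟩, hzG⟩, -⟩
      have hex : ∃ m, seqA k m < z := exists_seqA_lt hk hz0
      have hm : seqA k (Nat.find hex) < z := Nat.find_spec hex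
      have hmin : ∀ j, j < Nat.find hex → z ≤ seqA k j :=
        fun j hj => not_lt.1 (Nat.find_min hex hj)
      have hm0 : Nat.find hex ≠ 0 := by
        intro h0
        rw [h0, seqA_zero] at hm
        linarith
      obtain ⟨m', hm'⟩ : ∃ m', Nat.find hex = m' + 1 :=
        ⟨Nat.find hex - 1, by omega⟩
      rw [hm'] at hm
      have hup : z ≤ seqA k m' := hmin m' (by omega)
      rcases Nat.even_or_odd m' with ⟨n, hn⟩ | ⟨n, hn⟩
      · exfalso
        apply hzG
        refine Set.mem_iUnion.2 ⟨n, ?_⟩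
        constructor
        · rw [show 2 * n + 1 = m' + 1 from by omega]
          exact hm
        · rw [show 2 * n = m' from by omega]
          exact hup
      · refine Set.mem_iUnion.2 ⟨n, ?_⟩
        constructor
        · rw [show 2 * n + 2 = m' + 1 from by omega]
          exact hm
        · rw [show 2 * n + 1 = m' from by omega]
          exact hup
    · intro hz
      obtain ⟨n, hzn⟩ := Set.mem_iUnion.1 hz
      have hzn' := hzn
      rw [seqA_two_mul_add_two, seqA_two_mul_add_one] at hzn'
      obtain ⟨S1, S2, S3, S4, S5, S6, S7, S8, S9⟩ := stepOut_all hk n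
      have hz0 : 0 < z := lt_trans S6 hzn'.1
      have hz1 : z ≤ 1 := le_trans hzn'.2 (le_of_lt (lt_of_lt_of_le S2 (inv_all hk n).2.1))
      refine ⟨⟨⟨hz0, hz1⟩, ?_⟩, ?_⟩
      · intro hzG
        obtain ⟨i, hzi⟩ := Set.mem_iUnion.1 hzG
        rcases le_or_gt i n with hin | hin
        · have h1 : seqA k (2 * n + 1) ≤ seqA k (2 * i + 1) :=
            (seqA_strictAnti hk).antitone (by omega)
          have h2 := hzi.1
          have h3 := hzn.2
          linarith
        · have h1 : seqA k (2 * i) ≤ seqA k (2 * n + 2) :=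
            (seqA_strictAnti hk).antitone (by omega)
          have h2 := hzi.2
          have h3 := hzn.1
          linarith
      · exact kBadWrt_mono (GN_subset_Ginf k (n + 1)) (S8 z hzn'.1 hzn'.2)
  · -- uniqueness
    intro y hy
    exact funext (uniq hk y hy.1 hy.2.1 hy.2.2.1 hy.2.2.2.1 hy.2.2.2.2)
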